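/- Consider on ℝ^d the anchor given by the projection to the tangent bundle, i.e. ρ^i{}_J = (δ^i{}_j, 0), and an arbitrary differentiable totally antisymmetric twist T_{IJK} with components (H_{ijk}, f_{ij}{}^k, Q_i{}^{jk}, R^{ijk}). Then: (i) condition (ca1) holds identically; (ii) condition (ca2) holds if and only if f = Q = R = 0; and (iii) given f = Q = R = 0, condition (ca3) holds if and only if ∂_{[l} H_{ijk]} = 0, i.e. the 3-form H is closed. Thus the projection anchor permits exactly the H-twisted standard Courant algebroid with dH = 0. -/
import Mathlib


open scoped BigOperators

noncomputable section

/-- Doubled index set: `I = 1,…,2d` realized as `Fin d ⊕ Fin d`;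
`Sum.inl i` is the lower (vector) label `i`, `Sum.inr i` the upper (form) label `^i`. -/
abbrev DIdx (d : ℕ) := Fin d ⊕ Fin d

/-- The base space `ℝ^d`. -/
abbrev BSpace (d : ℕ) := Fin d → ℝ

/-- The constant split-signature metric `η = ((0,1_d),(1_d,0))`. -/
def eta {d : ℕ} : DIdx d → DIdx d → ℝ
  | Sum.inl i, Sum.inr j => if i = j then 1 else 0
  | Sum.inr i, Sum.inl j => if i = j then 1 else 0
  | _, _ => 0

/-- Partial derivative `∂_i f (x)` on the base `ℝ^d`. -/
def pdb {d : ℕ} (f : BSpace d → ℝ) (i : Fin d) (x : BSpace d) : ℝ :=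
  fderiv ℝ f x (Pi.single i 1)

/-- Weight-one antisymmetrization over three indices. -/
def asym3 {α : Type*} (G : α → α → α → ℝ) (a b c : α) : ℝ :=
  (1/6) * (G a b c - G a c b + G b c a - G b a c + G c a b - G c b a)

/-- Weight-one antisymmetrization over four indices. -/
def asym4 {α : Type*} (G : α → α → α → α → ℝ) (a b c e : α) : ℝ :=
  (1/24) * ∑ σ : Equiv.Perm (Fin 4),
    ((Equiv.Perm.sign σ : ℤ) : ℝ) *
      G (![a,b,c,e] (σ 0)) (![a,b,c,e] (σ 1)) (![a,b,c,e] (σ 2)) (![a,b,c,e] (σ 3))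

/-- Local Courant algebroid condition (ca1): `η^{IJ} ρ^i{}_I ρ^j{}_J = 0`. -/
def ca1 {d : ℕ} (r : BSpace d → Fin d → DIdx d → ℝ) : Prop :=
  ∀ (x : BSpace d) (i j : Fin d), ∑ I, ∑ J, eta I J * r x i I * r x j J = 0

/-- Local Courant algebroid condition (ca2):
`ρ^i{}_I ∂_i ρ^j{}_J − ρ^i{}_J ∂_i ρ^j{}_I = η^{KL} ρ^j{}_K T_{LIJ}`. -/
def ca2 {d : ℕ} (r : BSpace d → Fin d → DIdx d → ℝ)
    (T : BSpace d → DIdx d → DIdx d → DIdx d → ℝ) : Prop :=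
  ∀ (x : BSpace d) (j : Fin d) (I J : DIdx d),
    ∑ i, (r x i I * pdb (fun y => r y j J) i x - r x i J * pdb (fun y => r y j I) i x)
      = ∑ K, ∑ L, eta K L * r x j K * T x L I J

/-- Local Courant algebroid condition (ca3):
`4 ρ^i{}_{[L} ∂_i T_{IJK]} + 3 η^{MN} T_{M[IJ} T_{KL]N} = 0`. -/
def ca3 {d : ℕ} (r : BSpace d → Fin d → DIdx d → ℝ)
    (T : BSpace d → DIdx d → DIdx d → DIdx d → ℝ) : Prop :=
  ∀ (x : BSpace d) (I J K L : DIdx d),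
    4 * asym4 (fun a b c e => ∑ i, r x i a * pdb (fun y => T y b c e) i x) L I J K
      + 3 * asym4 (fun a b c e => ∑ M, ∑ N, eta M N * T x M a b * T x c e N) I J K L
      = 0

/-- The projection anchor `ρ^i{}_J = (δ^i{}_j, 0)`. -/
def rProj (d : ℕ) : BSpace d → Fin d → DIdx d → ℝ :=
  fun _ i => Sum.elim (fun j => if i = j then (1:ℝ) else 0) (fun _ => (0:ℝ))


section Aux

variable {d : ℕ}

lemma pdb_const (c : ℝ) (i : Fin d) (x : BSpace d) : pdb (fun _ : BSpace d => c) i x = 0 := by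
  simp [pdb]

lemma rProj_inl (x : BSpace d) (i j : Fin d) :
    rProj d x i (Sum.inl j) = if i = j then 1 else 0 := rfl

lemma rProj_inr (x : BSpace d) (i j : Fin d) : rProj d x i (Sum.inr j) = 0 := rfl

lemma asym4_inl (F : DIdx d → DIdx d → DIdx d → DIdx d → ℝ)
    (G : Fin d → Fin d → Fin d → Fin d → ℝ)
    (h : ∀ a b c e, F (Sum.inl a) (Sum.inl b) (Sum.inl c) (Sum.inl e) = G a b c e)
    (a b c e : Fin d) :
    asym4 F (Sum.inl a) (Sum.inl b) (Sum.inl c) (Sum.inl e) = asym4 G a b c e := by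
  unfold asym4
  congr 1
  apply Finset.sum_congr rfl
  intro σ _
  congr 1
  have hv : ∀ p : Fin 4,
      (![Sum.inl a, Sum.inl b, Sum.inl c, Sum.inl e] : Fin 4 → DIdx d) p
        = Sum.inl ((![a, b, c, e] : Fin 4 → Fin d) p) := by
    intro p; fin_cases p <;> rfl
  rw [hv, hv, hv, hv, h]

lemma asym4_vanish (F : DIdx d → DIdx d → DIdx d → DIdx d → ℝ)
    (hF : ∀ a b c e : DIdx d,
      (a.isRight = true ∨ b.isRight = true ∨ c.isRight = true ∨ e.isRight = true) →
        F a b c e = 0)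
    (a b c e : DIdx d)
    (h : a.isRight = true ∨ b.isRight = true ∨ c.isRight = true ∨ e.isRight = true) :
    asym4 F a b c e = 0 := by
  unfold asym4
  rw [Finset.sum_eq_zero, mul_zero]
  intro σ _
  set v : Fin 4 → DIdx d := ![a, b, c, e] with hv
  have hq : ∃ q : Fin 4, (v q).isRight = true := by
    rcases h with h | h | h | h
    · exact ⟨0, h⟩
    · exact ⟨1, h⟩
    · exact ⟨2, h⟩
    · exact ⟨3, h⟩
  obtain ⟨q, hq⟩ := hq
  have hp : ∃ p : Fin 4, σ p = q := ⟨σ.symm q, by simp⟩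
  obtain ⟨p, hp⟩ := hp
  have hz : F (v (σ 0)) (v (σ 1)) (v (σ 2)) (v (σ 3)) = 0 := by
    apply hF
    fin_cases p <;> rw [← hp] at hq <;> [exact Or.inl hq; exact Or.inr (Or.inl hq);
      exact Or.inr (Or.inr (Or.inl hq)); exact Or.inr (Or.inr (Or.inr hq))]
  rw [hz, mul_zero]

lemma asym4_of_zero {α : Type*} (G : α → α → α → α → ℝ)
    (h : ∀ a b c e, G a b c e = 0) (a b c e : α) : asym4 G a b c e = 0 := by
  unfold asym4
  rw [Finset.sum_eq_zero, mul_zero]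
  intro σ _
  rw [h, mul_zero]

end Aux

/-- For the projection anchor: (i) (ca1) holds identically; (ii) (ca2)
holds iff `f = Q = R = 0`; (iii) given `f = Q = R = 0`, (ca3) holds iff
`∂_{[l} H_{ijk]} = 0`, i.e. `H` is closed.  Thus the projection anchor permits exactly
the `H`-twisted standard Courant algebroid with `dH = 0`. -/
theorem statement17 {d : ℕ} (T : BSpace d → DIdx d → DIdx d → DIdx d → ℝ)
    (hTd : ∀ I J K : DIdx d, Differentiable ℝ fun x => T x I J K)
    (hT1 : ∀ (x : BSpace d) (I J K : DIdx d), T x I J K = -T x J I K)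
    (hT2 : ∀ (x : BSpace d) (I J K : DIdx d), T x I J K = -T x I K J) :
    ca1 (rProj d)
    ∧ (ca2 (rProj d) T ↔
        ((∀ (x : BSpace d) (i j k : Fin d), T x (Sum.inl i) (Sum.inl j) (Sum.inr k) = 0)
          ∧ (∀ (x : BSpace d) (i j k : Fin d), T x (Sum.inl i) (Sum.inr j) (Sum.inr k) = 0)
          ∧ (∀ (x : BSpace d) (i j k : Fin d), T x (Sum.inr i) (Sum.inr j) (Sum.inr k) = 0)))
    ∧ (((∀ (x : BSpace d) (i j k : Fin d), T x (Sum.inl i) (Sum.inl j) (Sum.inr k) = 0)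
          ∧ (∀ (x : BSpace d) (i j k : Fin d), T x (Sum.inl i) (Sum.inr j) (Sum.inr k) = 0)
          ∧ (∀ (x : BSpace d) (i j k : Fin d), T x (Sum.inr i) (Sum.inr j) (Sum.inr k) = 0)) →
        (ca3 (rProj d) T ↔
          ∀ (x : BSpace d) (i j k l : Fin d),
            asym4 (fun a b c e =>
              pdb (fun y => T y (Sum.inl b) (Sum.inl c) (Sum.inl e)) a x) l i j k = 0)) := by
  -- vanishing of T whenever an index is an upper (inr) index, given f = Q = R = 0
  have hz1 : ((∀ (x : BSpace d) (i j k : Fin d), T x (Sum.inl i) (Sum.inl j) (Sum.inr k) = 0)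
      ∧ (∀ (x : BSpace d) (i j k : Fin d), T x (Sum.inl i) (Sum.inr j) (Sum.inr k) = 0)
      ∧ (∀ (x : BSpace d) (i j k : Fin d), T x (Sum.inr i) (Sum.inr j) (Sum.inr k) = 0)) →
      ∀ (x : BSpace d) (a : Fin d) (J K : DIdx d), T x (Sum.inr a) J K = 0 := by
    rintro ⟨hf, hQ, hR⟩ x a J K
    rcases J with j | j <;> rcases K with k | k
    · have h1 := hT1 x (Sum.inl j) (Sum.inr a) (Sum.inl k)
      have h2 := hT2 x (Sum.inl j) (Sum.inl k) (Sum.inr a)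
      have h3 := hf x j k a
      linarith
    · have h1 := hT1 x (Sum.inl j) (Sum.inr a) (Sum.inr k)
      have h2 := hQ x j a k
      linarith
    · have h1 := hT2 x (Sum.inr a) (Sum.inr j) (Sum.inl k)
      have h2 := hT1 x (Sum.inl k) (Sum.inr a) (Sum.inr j)
      have h3 := hQ x k a j
      linarith
    · exact hR x a j k
  refine ⟨?_, ?_, ?_⟩
  · -- (i) ca1
    intro x i j
    simp [Fintype.sum_sum_type, eta, rProj]
  · -- (ii) ca2 iff f = Q = R = 0
    have key : ∀ (x : BSpace d) (j : Fin d) (I J : DIdx d),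
        (∑ i, (rProj d x i I * pdb (fun y => rProj d y j J) i x
            - rProj d x i J * pdb (fun y => rProj d y j I) i x)
          = ∑ K, ∑ L, eta K L * rProj d x j K * T x L I J)
        ↔ T x (Sum.inr j) I J = 0 := by
      intro x j I J
      have hp : ∀ (K : DIdx d) (i : Fin d), pdb (fun y => rProj d y j K) i x = 0 := by
        intro K i
        have he : (fun y : BSpace d => rProj d y j K) = fun _ => rProj d x j K := rfl
        rw [he, pdb_const]
      have hRHS : ∑ K, ∑ L, eta K L * rProj d x j K * T x L I J
          = T x (Sum.inr j) I J := by
        simp [Fintype.sum_sum_type, eta, rProj_inl, rProj_inr, ite_mul, mul_ite,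
          Finset.sum_ite_eq, Finset.sum_ite_eq']
      rw [hRHS]
      simp [hp]
      exact eq_comm
    constructor
    · intro h
      have hA : ∀ (x : BSpace d) (j : Fin d) (I J : DIdx d), T x (Sum.inr j) I J = 0 :=
        fun x j I J => (key x j I J).mp (h x j I J)
      refine ⟨?_, ?_, ?_⟩
      · intro x i j k
        have h1 := hT2 x (Sum.inl i) (Sum.inl j) (Sum.inr k)
        have h2 := hT1 x (Sum.inl i) (Sum.inr k) (Sum.inl j)
        have h3 := hA x k (Sum.inl i) (Sum.inl j)
        linarith
      · intro x i j k
        have h1 := hT1 x (Sum.inl i) (Sum.inr j) (Sum.inr k)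
        have h2 := hA x j (Sum.inl i) (Sum.inr k)
        linarith
      · intro x i j k
        exact hA x i (Sum.inr j) (Sum.inr k)
    · intro htriple x j I J
      exact (key x j I J).mpr (hz1 htriple x j I J)
  · -- (iii)
    intro htriple
    have h1 := hz1 htriple
    have h2 : ∀ (x : BSpace d) (J : DIdx d) (a : Fin d) (K : DIdx d),
        T x J (Sum.inr a) K = 0 := by
      intro x J a K
      have := hT1 x J (Sum.inr a) K
      have := h1 x a J K
      linarith
    have h3 : ∀ (x : BSpace d) (J K : DIdx d) (a : Fin d),
        T x J K (Sum.inr a) = 0 := by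
      intro x J K a
      have := hT2 x J K (Sum.inr a)
      have := h2 x J a K
      linarith
    have hsec : ∀ (x : BSpace d) (a b c e : DIdx d),
        (∑ M, ∑ N, eta M N * T x M a b * T x c e N) = 0 := by
      intro x a b c e
      apply Finset.sum_eq_zero
      intro M _
      apply Finset.sum_eq_zero
      intro N _
      rcases M with m | m
      · rcases N with n | n
        · simp [eta]
        · rw [h3, mul_zero]
      · rw [h1, mul_zero, zero_mul]
    have hFzero : ∀ (x : BSpace d) (a b c e : DIdx d),
        (a.isRight = true ∨ b.isRight = true ∨ c.isRight = true ∨ e.isRight = true) →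
        (∑ i, rProj d x i a * pdb (fun y => T y b c e) i x) = 0 := by
      intro x a b c e h
      rcases h with h | h | h | h
      · obtain ⟨m, rfl⟩ := Sum.isRight_iff.mp h
        simp [rProj_inr]
      · obtain ⟨m, rfl⟩ := Sum.isRight_iff.mp h
        have he : (fun y => T y (Sum.inr m) c e) = fun _ : BSpace d => (0:ℝ) := by
          funext y; exact h1 y m c e
        simp [he, pdb_const]
      · obtain ⟨m, rfl⟩ := Sum.isRight_iff.mp h
        have he : (fun y => T y b (Sum.inr m) e) = fun _ : BSpace d => (0:ℝ) := by
          funext y; exact h2 y b m e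
        simp [he, pdb_const]
      · obtain ⟨m, rfl⟩ := Sum.isRight_iff.mp h
        have he : (fun y => T y b c (Sum.inr m)) = fun _ : BSpace d => (0:ℝ) := by
          funext y; exact h3 y b c m
        simp [he, pdb_const]
    have hFG : ∀ (x : BSpace d) (a b c e : Fin d),
        (∑ i, rProj d x i (Sum.inl a)
          * pdb (fun y => T y (Sum.inl b) (Sum.inl c) (Sum.inl e)) i x)
        = pdb (fun y => T y (Sum.inl b) (Sum.inl c) (Sum.inl e)) a x := by
      intro x a b c e
      simp [rProj_inl, ite_mul, Finset.sum_ite_eq, Finset.sum_ite_eq']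
    constructor
    · intro h x i j k l
      have hc := h x (Sum.inl i) (Sum.inl j) (Sum.inl k) (Sum.inl l)
      have hs : asym4 (fun a b c e => ∑ M, ∑ N, eta M N * T x M a b * T x c e N)
          (Sum.inl i) (Sum.inl j) (Sum.inl k) (Sum.inl l) = 0 := by
        exact asym4_of_zero _ (fun a b c e => hsec x a b c e) _ _ _ _
      have h1' := asym4_inl
        (fun a b c e => ∑ i, rProj d x i a * pdb (fun y => T y b c e) i x)
        (fun a b c e => pdb (fun y => T y (Sum.inl b) (Sum.inl c) (Sum.inl e)) a x)
        (fun a b c e => hFG x a b c e) l i j k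
      rw [h1', hs] at hc
      linarith
    · intro h x I J K L
      have hs : asym4 (fun a b c e => ∑ M, ∑ N, eta M N * T x M a b * T x c e N)
          I J K L = 0 := by
        exact asym4_of_zero _ (fun a b c e => hsec x a b c e) _ _ _ _
      rw [hs, mul_zero, add_zero]
      suffices hsuf : asym4 (fun a b c e =>
          ∑ i, rProj d x i a * pdb (fun y => T y b c e) i x) L I J K = 0 by
        rw [hsuf]; ring
      rcases I with i | i <;> rcases J with j | j <;> rcases K with k | k <;>
        rcases L with l | l <;>
        first
          | (rw [asym4_inl _ (fun a b c e =>
                pdb (fun y => T y (Sum.inl b) (Sum.inl c) (Sum.inl e)) a x)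
                (fun a b c e => hFG x a b c e)]
             exact h x i j k l)
          | exact asym4_vanish _ (hFzero x) _ _ _ _ (by simp)
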